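/- Let q be a prime power, m a positive integer, n = q^{2m} − 1, and δ_max = q^{m + [m is even]} − 1 − (q^2 − 2)·[m is even]. For every integer x with 1 ≤ x < δ_max, every element of the q^2-ary cyclotomic coset of qx modulo n, namely {q x q^{2j} mod n : j ≥ 0}, is at most n − δ_max. -/

import Mathlib

lemma rot_key (A B u v x : ℕ) (hu : u < A) (hv : v < B) (hx : x = u * B + v)
    (hxb : x + 2 ≤ A * B) : u + v * A + 2 ≤ A * B := by
  by_cases hvB : v + 1 = B
  · have h1 : (u + 1) * (v + 1) < A * (v + 1) := by nlinarith
    have h2 : u + 1 < A := Nat.lt_of_mul_lt_mul_right h1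
    rw [← hvB]; nlinarith
  · have hv2 : v + 2 ≤ B := by omega
    have h3 : A * (v + 2) ≤ A * B := Nat.mul_le_mul_left A hv2
    nlinarith

lemma rot' (A B x : ℕ) (_hApos : 0 < A) (hBpos : 0 < B) (hxAB : x + 2 ≤ A * B) :
    x * A % (A * B - 1) = x / B + x % B * A := by
  have hdm : x / B * B + x % B = x := Nat.div_add_mod' x B
  have huA : x / B < A := (Nat.div_lt_iff_lt_mul hBpos).mpr (by omega)
  have hvB : x % B < B := Nat.mod_lt _ hBpos
  have hkey : x / B + x % B * A + 2 ≤ A * B :=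
    rot_key A B (x / B) (x % B) x huA hvB (by omega) hxAB
  have h1ab : 1 ≤ A * B := by omega
  have hid : x * A = (A * B - 1) * (x / B) + (x / B + x % B * A) := by
    zify [h1ab]
    nlinarith [hdm]
  rw [hid, Nat.mul_add_mod, Nat.mod_eq_of_lt (by omega)]

lemma rot (q e f x : ℕ) (hq : 1 ≤ q) (hx : x < q ^ (e + f) - 1) :
    x * q ^ e % (q ^ (e + f) - 1) = x / q ^ f + x % q ^ f * q ^ e := by
  have hAB : q ^ (e + f) = q ^ e * q ^ f := pow_add q e f
  have hApos : 0 < q ^ e := Nat.pow_pos hq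
  have hBpos : 0 < q ^ f := Nat.pow_pos hq
  rw [hAB] at hx ⊢
  exact rot' (q ^ e) (q ^ f) x hApos hBpos (by omega)

lemma coset_elem (q m x k : ℕ) (hq : 2 ≤ q) (hm : 0 < m) (hx : x < q ^ (2 * m) - 1) :
    ∃ e, e % 2 = 1 ∧ e < 2 * m ∧
      q * x * (q ^ 2) ^ k % (q ^ (2 * m) - 1) =
        x / q ^ (2 * m - e) + x % q ^ (2 * m - e) * q ^ e := by
  have h2m : 0 < 2 * m := by omega
  set n := q ^ (2 * m) - 1 with hn
  have hpow1 : 1 ≤ q ^ (2 * m) := Nat.one_le_pow _ _ (by omega)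
  refine ⟨(2 * k + 1) % (2 * m), ?_, Nat.mod_lt _ h2m, ?_⟩
  · have hde := Nat.div_add_mod (2 * k + 1) (2 * m)
    obtain ⟨w, hw⟩ : ∃ w, 2 * w + (2 * k + 1) % (2 * m) = 2 * k + 1 :=
      ⟨m * ((2 * k + 1) / (2 * m)), by rw [show 2 * (m * ((2 * k + 1) / (2 * m))) =
        2 * m * ((2 * k + 1) / (2 * m)) from by ring]; exact hde⟩
    omega
  · set e := (2 * k + 1) % (2 * m) with he
    set t := (2 * k + 1) / (2 * m) with ht
    have hstep1 : q * x * (q ^ 2) ^ k = x * q ^ (2 * k + 1) := by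
      rw [← pow_mul, pow_succ]; ring
    have hmodeq : q ^ (2 * m) ≡ 1 [MOD n] := by
      show q ^ (2 * m) % n = 1 % n
      rw [show q ^ (2 * m) = n + 1 from by omega, Nat.add_mod_left]
    have hexp : q ^ (2 * k + 1) = (q ^ (2 * m)) ^ t * q ^ e := by
      rw [← pow_mul, ← pow_add]
      congr 1
      exact (Nat.div_add_mod (2 * k + 1) (2 * m)).symm
    have hmeq : x * ((q ^ (2 * m)) ^ t * q ^ e) ≡ x * (1 ^ t * q ^ e) [MOD n] :=
      Nat.ModEq.mul_left x (Nat.ModEq.mul_right _ (hmodeq.pow t))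
    have : x * q ^ (2 * k + 1) % n = x * q ^ e % n := by
      rw [hexp]
      have h2 := hmeq
      simp only [one_pow, one_mul] at h2
      exact h2
    rw [hstep1, this]
    have hef : e + (2 * m - e) = 2 * m := by
      have : e < 2 * m := Nat.mod_lt _ h2m
      omega
    have := rot q e (2 * m - e) x (by omega) (by rw [hef]; exact hx)
    rw [hef] at this
    exact this

lemma bound_odd (q m e x : ℕ) (hq : 2 ≤ q) (hm : 0 < m) (he : e < 2 * m)
    (hx2 : x < q ^ m - 1) :
    x / q ^ (2 * m - e) + x % q ^ (2 * m - e) * q ^ e ≤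
      q ^ (2 * m) - 1 - (q ^ m - 1) := by
  set f := 2 * m - e with hf
  have hqm1 : 1 ≤ q ^ m := Nat.one_le_pow _ _ (by omega)
  have hmm : q ^ m * q ^ m = q ^ (2 * m) := by rw [← pow_add]; congr 1; omega
  have hm2m : q ^ m ≤ q ^ (2 * m) := Nat.pow_le_pow_right (by omega) (by omega)
  rcases le_or_gt e m with hem | hem
  · -- e ≤ m, so f ≥ m, u = 0, v = x
    have hmf : q ^ m ≤ q ^ f := Nat.pow_le_pow_right (by omega) (by omega)
    have hxf : x < q ^ f := by omega
    rw [Nat.div_eq_of_lt hxf, Nat.mod_eq_of_lt hxf]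
    have h1 : q ^ e ≤ q ^ m := Nat.pow_le_pow_right (by omega) hem
    have h3 : x * q ^ e ≤ x * q ^ m := Nat.mul_le_mul_left x h1
    have h4 : (x + 2) * q ^ m ≤ q ^ m * q ^ m := Nat.mul_le_mul_right _ (by omega)
    zify [hqm1, hm2m, show 1 ≤ q ^ (2*m) from by omega,
      show q ^ m - 1 ≤ q ^ (2*m) - 1 from by omega] at h3 h4 ⊢
    nlinarith
  · -- e ≥ m + 1, f ≤ m - 1
    have hfm : f < m := by omega
    have hBpos : 0 < q ^ f := Nat.one_le_pow _ _ (by omega)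
    have hDmul : q ^ (m - f) * q ^ f = q ^ m := by rw [← pow_add]; congr 1; omega
    have huD : x / q ^ f < q ^ (m - f) :=
      (Nat.div_lt_iff_lt_mul hBpos).mpr (by rw [hDmul]; omega)
    have hDm : q ^ (m - f) ≤ q ^ m := Nat.pow_le_pow_right (by omega) (by omega)
    have h2C : 2 * q ^ m ≤ q ^ e := by
      have h1 : q ^ (m + 1) ≤ q ^ e := Nat.pow_le_pow_right (by omega) (by omega)
      have h2 : q ^ (m + 1) = q ^ m * q := pow_succ q m
      nlinarith
    have hvB : x % q ^ f < q ^ f := Nat.mod_lt _ hBpos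
    have hmul : (x % q ^ f + 1) * q ^ e ≤ q ^ f * q ^ e := Nat.mul_le_mul_right _ (by omega)
    have hAB : q ^ f * q ^ e = q ^ (2 * m) := by rw [← pow_add]; congr 1; omega
    zify [hqm1, hm2m, show 1 ≤ q ^ (2*m) from by omega,
      show q ^ m - 1 ≤ q ^ (2*m) - 1 from by omega] at hmul ⊢
    nlinarith

set_option maxHeartbeats 1600000 in
lemma bound_even (q m e x : ℕ) (hq : 2 ≤ q) (hm : 2 ≤ m) (hme : m % 2 = 0)
    (he : e < 2 * m) (heo : e % 2 = 1)
    (hx2 : x < q ^ (m + 1) - 1 - (q ^ 2 - 2)) :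
    x / q ^ (2 * m - e) + x % q ^ (2 * m - e) * q ^ e ≤
      q ^ (2 * m) - 1 - (q ^ (m + 1) - 1 - (q ^ 2 - 2)) := by
  set f := 2 * m - e with hf
  have hQ2 : 4 ≤ q ^ 2 := by nlinarith
  have hQ2P : q ^ 2 ≤ q ^ (m + 1) := Nat.pow_le_pow_right (by omega) (by omega)
  have hPR : q ^ (m + 1) ≤ q ^ (2 * m) := Nat.pow_le_pow_right (by omega) (by omega)
  have hxP : x + q ^ 2 ≤ q ^ (m + 1) := by omega
  have hs1 : (2:ℕ) ≤ q ^ 2 := by omega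
  have hs2 : q ^ 2 - 2 ≤ q ^ (m + 1) - 1 := by omega
  have hs3 : q ^ (m + 1) - 1 - (q ^ 2 - 2) ≤ q ^ (2 * m) - 1 := by omega
  have hs4 : (1:ℕ) ≤ q ^ (2 * m) := by omega
  have hs5 : (1:ℕ) ≤ q ^ (m + 1) := by omega
  rcases lt_trichotomy e m with hem | hem | hem
  · -- e < m, so f ≥ m + 1, u = 0, v = x
    have hmf : q ^ (m + 1) ≤ q ^ f := Nat.pow_le_pow_right (by omega) (by omega)
    have hxf : x < q ^ f := by omega
    rw [Nat.div_eq_of_lt hxf, Nat.mod_eq_of_lt hxf]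
    have h1 : q ^ e ≤ q ^ (m - 1) := Nat.pow_le_pow_right (by omega) (by omega)
    have h3 : x * q ^ e ≤ x * q ^ (m - 1) := Nat.mul_le_mul_left x h1
    have h4 : (x + q ^ 2) * q ^ (m - 1) ≤ q ^ (m + 1) * q ^ (m - 1) :=
      Nat.mul_le_mul_right _ hxP
    have h5 : q ^ 2 * q ^ (m - 1) = q ^ (m + 1) := by rw [← pow_add]; congr 1; omega
    have h6 : q ^ (m + 1) * q ^ (m - 1) = q ^ (2 * m) := by rw [← pow_add]; congr 1; omega
    zify [hs1, hs2, hs3, hs4, hs5] at h3 h4 ⊢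
    nlinarith
  · omega
  · -- e > m, e odd, m even so e ≥ m + 1
    have hBpos : 0 < q ^ f := Nat.one_le_pow _ _ (by omega)
    have hvB : x % q ^ f < q ^ f := Nat.mod_lt _ hBpos
    have hdm : x / q ^ f * q ^ f + x % q ^ f = x := Nat.div_add_mod' x (q ^ f)
    rcases eq_or_lt_of_le (show m + 1 ≤ e from by omega) with hem1 | hem1
    · -- e = m + 1, f = m - 1
      have hfm : f = m - 1 := by omega
      have hA : q ^ 2 * q ^ f = q ^ (m + 1) := by rw [← pow_add]; congr 1; omega
      have hR : q ^ (m + 1) * q ^ f = q ^ (2 * m) := by rw [← pow_add]; congr 1; omega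
      have hxA : x < q ^ 2 * q ^ f := by omega
      have huQ : x / q ^ f < q ^ 2 := (Nat.div_lt_iff_lt_mul hBpos).mpr (by omega)
      by_cases hv1 : x % q ^ f + 1 = q ^ f
      · -- v = B - 1: show u + 2 ≤ q^2
        have h1 : (x / q ^ f + 1) * q ^ f < q ^ 2 * q ^ f := by nlinarith
        have h2 : x / q ^ f + 1 < q ^ 2 := Nat.lt_of_mul_lt_mul_right h1
        have h3 : (x % q ^ f + 1) * q ^ e = q ^ f * q ^ e := by rw [hv1]
        have hR2 : q ^ f * q ^ e = q ^ (2 * m) := by rw [← pow_add]; congr 1; omega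
        have hE : q ^ e = q ^ (m + 1) := by rw [← hem1]
        zify [hs1, hs2, hs3, hs4, hs5] at h2 h3 hR2 hE ⊢
        linarith
      · have hv2 : x % q ^ f + 2 ≤ q ^ f := by omega
        have h3 : (x % q ^ f + 2) * q ^ e ≤ q ^ f * q ^ e := Nat.mul_le_mul_right _ hv2
        have hR2 : q ^ f * q ^ e = q ^ (2 * m) := by rw [← pow_add]; congr 1; omega
        have hE : q ^ e = q ^ (m + 1) := by rw [← hem1]
        zify [hs1, hs2, hs3, hs4, hs5] at huQ h3 hR2 hE ⊢
        linarith
    · -- e ≥ m + 3 (e odd, m even, e ≥ m + 2)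
      have hem3 : m + 3 ≤ e := by omega
      have hf3 : 1 ≤ f ∧ f ≤ m - 3 := by omega
      have hDmul : q ^ (m + 1 - f) * q ^ f = q ^ (m + 1) := by rw [← pow_add]; congr 1; omega
      have huD : x / q ^ f < q ^ (m + 1 - f) :=
        (Nat.div_lt_iff_lt_mul hBpos).mpr (by omega)
      have hDm : q ^ (m + 1 - f) ≤ q ^ m := Nat.pow_le_pow_right (by omega) (by omega)
      have hmP : q ^ m ≤ q ^ (m + 1) := Nat.pow_le_pow_right (by omega) (by omega)
      have h4P : 4 * q ^ (m + 1) ≤ q ^ e := by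
        have h1 : q ^ (m + 3) ≤ q ^ e := Nat.pow_le_pow_right (by omega) hem3
        have h2 : q ^ 2 * q ^ (m + 1) = q ^ (m + 3) := by rw [← pow_add]; congr 1; omega
        nlinarith
      have hmul : (x % q ^ f + 1) * q ^ e ≤ q ^ f * q ^ e := Nat.mul_le_mul_right _ (by omega)
      have hAB : q ^ f * q ^ e = q ^ (2 * m) := by rw [← pow_add]; congr 1; omega
      zify [hs1, hs2, hs3, hs4, hs5] at hmul huD hDm hmP h4P hAB ⊢
      linarith
/-- The `q`-ary cyclotomic coset of `x` modulo `n`: `{x q^k mod n : k ≥ 0}`. -/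
def cycCoset (q n x : ℕ) : Set ℕ := {y | ∃ k : ℕ, y = x * q ^ k % n}

/-- For `n = q^{2m} - 1` and `δ_max = q^{m + [m even]} - 1 - (q^2-2)·[m even]`:
for every `1 ≤ x < δ_max`, every element of the `q^2`-ary cyclotomic coset of
`q·x` modulo `n` is at most `n - δ_max`. -/
theorem cycCoset_qx_max
    (q m : ℕ) (hq : IsPrimePow q) (hm : 0 < m)
    (x : ℕ) (hx1 : 1 ≤ x)
    (hx2 : x < q ^ (m + (if Even m then 1 else 0)) - 1 -
      (q ^ 2 - 2) * (if Even m then 1 else 0)) :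
    ∀ y ∈ cycCoset (q ^ 2) (q ^ (2 * m) - 1) (q * x),
      y ≤ (q ^ (2 * m) - 1) -
        (q ^ (m + (if Even m then 1 else 0)) - 1 -
          (q ^ 2 - 2) * (if Even m then 1 else 0)) := by
  intro y hy
  obtain ⟨k, hk⟩ := hy
  have hq2 : 2 ≤ q := hq.two_le
  by_cases hme : Even m
  · simp only [if_pos hme, mul_one] at hx2 ⊢
    have hm2 : 2 ≤ m := by
      rcases hme with ⟨r, hr⟩; omega
    have hm0 : m % 2 = 0 := Nat.even_iff.mp hme
    have hup : q ^ (m + 1) ≤ q ^ (2 * m) := Nat.pow_le_pow_right (by omega) (by omega)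
    have h1p : 1 ≤ q ^ (m + 1) := Nat.one_le_pow _ _ (by omega)
    have hxlt : x < q ^ (2 * m) - 1 := by omega
    obtain ⟨e, heo, he, hrot⟩ := coset_elem q m x k hq2 (by omega) hxlt
    rw [hk, hrot]
    exact bound_even q m e x hq2 hm2 hm0 he heo hx2
  · simp only [if_neg hme, mul_zero, add_zero, Nat.sub_zero] at hx2 ⊢
    have hup : q ^ m ≤ q ^ (2 * m) := Nat.pow_le_pow_right (by omega) (by omega)
    have h1p : 1 ≤ q ^ m := Nat.one_le_pow _ _ (by omega)
    have hxlt : x < q ^ (2 * m) - 1 := by omega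
    obtain ⟨e, heo, he, hrot⟩ := coset_elem q m x k hq2 hm hxlt
    rw [hk, hrot]
    exact bound_odd q m e x hq2 hm he hx2
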